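/- Let w ∈ ℂ with Im w > 0 and let −u ≤ Re w ≤ u with u > 0. The harmonic measure of the interval [−u, u] ⊂ ℝ seen from w in the upper half-plane, given by ω(w) = (1/π)·(arctan((Re w + u)/Im w) − arctan((Re w − u)/Im w)), satisfies ω(w) ≥ (2/π)·arctan(u/|w|) whenever 0 < |w| < u. -/

import Mathlib

open Real Filter Asymptotics MeasureTheory Set Topology

noncomputable def trigamma (y : ℝ) : ℝ := ∑' m : ℕ, 1 / (m + y)^2

noncomputable def psi2 (y : ℝ) : ℝ := -2 * ∑' m : ℕ, 1 / (m + y)^3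

theorem stmt13 (u : ℝ) (hu : 0 < u) (w : ℂ) (him : 0 < w.im)
    (hre₁ : -u ≤ w.re) (hre₂ : w.re ≤ u)
    (habs : 0 < ‖w‖) (habsu : ‖w‖ < u) :
    (1/π) * (Real.arctan ((w.re + u)/w.im) - Real.arctan ((w.re - u)/w.im))
      ≥ (2/π) * Real.arctan (u / ‖w‖) := by
  set x := w.re
  set y := w.im
  set ρ := ‖w‖ with hρ
  have hr2 : ρ ^ 2 = x ^ 2 + y ^ 2 := by
    rw [hρ, Complex.sq_norm, Complex.normSq_apply]; ring
  have hru : ρ ^ 2 < u ^ 2 := by nlinarith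
  have hxu : x ^ 2 < u ^ 2 := by nlinarith
  have hxlt : -u < x ∧ x < u := by constructor <;> nlinarith
  have hyρ : y ≤ ρ := by nlinarith
  -- Step A+B : LHS rewrite
  have ha : 0 < (x + u) / y := div_pos (by linarith [hxlt.1]) him
  have hprod : 1 < (x + u) / y * ((u - x) / y) := by
    rw [div_mul_div_comm, lt_div_iff₀ (by positivity)]
    nlinarith
  have hA : Real.arctan ((x + u)/y) - Real.arctan ((x - u)/y)
      = π - Real.arctan (2*u*y/(u^2 - ρ^2)) := by
    have h1 : Real.arctan ((x - u)/y) = - Real.arctan ((u - x)/y) := by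
      rw [← Real.arctan_neg]; ring_nf
    rw [h1, sub_neg_eq_add, Real.arctan_add_eq_add_pi hprod ha]
    have hd1 : 1 - (x + u) / y * ((u - x) / y) ≠ 0 := by linarith
    have hd2 : (u^2 - ρ^2) ≠ 0 := by nlinarith
    have h2 : ((x + u) / y + (u - x) / y) / (1 - (x + u) / y * ((u - x) / y))
        = -(2*u*y)/(u^2 - ρ^2) := by
      rw [div_eq_div_iff hd1 hd2, hr2]
      field_simp
      ring
    rw [neg_div] at h2
    rw [h2, Real.arctan_neg]; ring
  -- Step C : RHS rewrite
  have hC : Real.arctan (u / ρ) = π/2 - Real.arctan (ρ / u) := by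
    have : u / ρ = (ρ / u)⁻¹ := by field_simp
    rw [this, Real.arctan_inv_of_pos (div_pos habs hu)]
  -- Step D : doubling
  have ht : ρ / u * (ρ / u) < 1 := by
    rw [div_mul_div_comm, div_lt_one (by positivity)]; nlinarith
  have hD : Real.arctan (ρ/u) + Real.arctan (ρ/u)
      = Real.arctan (2*u*ρ/(u^2 - ρ^2)) := by
    rw [Real.arctan_add ht]
    congr 1
    rw [div_eq_div_iff (by linarith) (by nlinarith : (0:ℝ) < u^2 - ρ^2).ne']
    field_simp
    ring
  -- Step E : monotonicity
  have hE : Real.arctan (2*u*y/(u^2 - ρ^2)) ≤ Real.arctan (2*u*ρ/(u^2 - ρ^2)) := by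
    apply Real.arctan_strictMono.monotone
    have hpos : (0:ℝ) < u^2 - ρ^2 := by nlinarith
    exact (div_le_div_iff_of_pos_right hpos).mpr (by nlinarith)
  have hkey : Real.arctan ((x + u)/y) - Real.arctan ((x - u)/y)
      ≥ 2 * Real.arctan (u / ρ) := by
    rw [hA, hC]
    linarith [hD ▸ hE]
  have hπ : 0 < π := Real.pi_pos
  rw [ge_iff_le]
  calc (2/π) * Real.arctan (u / ρ) = (1/π) * (2 * Real.arctan (u / ρ)) := by ring
    _ ≤ _ := mul_le_mul_of_nonneg_left hkey (by positivity)
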